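/- Let G be a 2-edge-connected cubic multigraph with an even number of vertices. Then for every edge e of G, there is a 2-factor of G containing e. -/

import Mathlib

/-- A loopless multigraph: a set of edges `E`, each with two distinct endpoints in `V`. -/
structure Multigraph (V : Type*) (E : Type*) where
  ends : E → Sym2 V
  loopless : ∀ e : E, ¬ (ends e).IsDiag

namespace Multigraph

variable {V E : Type*}

/-- `u` and `v` are joined by a walk using only edges from `S`. -/
def Connects (M : Multigraph V E) (S : Set E) (u v : V) : Prop :=
  Relation.ReflTransGen (fun a b => ∃ e ∈ S, M.ends e = s(a, b)) u v

/-- The multigraph is connected using only the edges in `S`. -/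
def ConnectedOn (M : Multigraph V E) (S : Set E) : Prop :=
  ∀ u v : V, M.Connects S u v

/-- The multigraph is connected. -/
def Connected (M : Multigraph V E) : Prop := M.ConnectedOn Set.univ

/-- An edge is a bridge if its deletion disconnects its endpoints. -/
def IsBridge (M : Multigraph V E) (e : E) : Prop :=
  ∀ u v : V, M.ends e = s(u, v) → ¬ M.Connects {e' | e' ≠ e} u v

/-- The degree of a vertex: the number of edges incident with it. -/
noncomputable def degree (M : Multigraph V E) (v : V) : ℕ :=
  {e : E | v ∈ M.ends e}.ncard

/-- The multigraph is cubic: every vertex has degree `3`. -/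
def IsCubic (M : Multigraph V E) : Prop := ∀ v : V, M.degree v = 3

/-- A `2`-factor: a set of edges in which every vertex lies on exactly two edges,
i.e. a spanning `2`-regular subgraph. -/
def IsTwoFactor (M : Multigraph V E) (F : Set E) : Prop :=
  ∀ v : V, {e : E | e ∈ F ∧ v ∈ M.ends e}.ncard = 2

end Multigraph




open SimpleGraph

namespace TF

variable {V : Type*} {G : SimpleGraph V}

/-- The support in `V` of a connected component of an induced subgraph. -/
def csupp {A : Set V} (c : (G.induce A).ConnectedComponent) : Set V :=
  Subtype.val '' c.supp

lemma mem_csupp {A : Set V} {c : (G.induce A).ConnectedComponent} {v : V} :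
    v ∈ csupp c ↔ ∃ h : v ∈ A, (G.induce A).connectedComponentMk ⟨v, h⟩ = c := by
  constructor
  · rintro ⟨⟨w, hw⟩, hsupp, rfl⟩
    exact ⟨hw, (ConnectedComponent.mem_supp_iff _ _).mp hsupp⟩
  · rintro ⟨h, hc⟩
    exact ⟨⟨v, h⟩, (ConnectedComponent.mem_supp_iff _ _).mpr hc, rfl⟩

lemma csupp_subset {A : Set V} (c : (G.induce A).ConnectedComponent) : csupp c ⊆ A := by
  rintro v hv
  exact (mem_csupp.mp hv).1

lemma mem_csupp_self {A : Set V} (v : V) (h : v ∈ A) :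
    v ∈ csupp ((G.induce A).connectedComponentMk ⟨v, h⟩) :=
  mem_csupp.mpr ⟨h, rfl⟩

lemma csupp_nonempty {A : Set V} (c : (G.induce A).ConnectedComponent) :
    (csupp c).Nonempty := by
  induction c using ConnectedComponent.ind with
  | _ v => exact ⟨v.1, mem_csupp_self v.1 v.2⟩

lemma comp_eq_of_mem_csupp {A : Set V} {c d : (G.induce A).ConnectedComponent} {v : V}
    (hc : v ∈ csupp c) (hd : v ∈ csupp d) : c = d := by
  obtain ⟨h1, rfl⟩ := mem_csupp.mp hc
  obtain ⟨h2, rfl⟩ := mem_csupp.mp hd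
  rfl

lemma csupp_disjoint {A : Set V} {c d : (G.induce A).ConnectedComponent} (h : c ≠ d) :
    Disjoint (csupp c) (csupp d) :=
  Set.disjoint_left.mpr fun _ hc hd => h (comp_eq_of_mem_csupp hc hd)

lemma csupp_injective {A : Set V} {c d : (G.induce A).ConnectedComponent}
    (h : csupp c = csupp d) : c = d := by
  obtain ⟨v, hv⟩ := csupp_nonempty c
  exact comp_eq_of_mem_csupp hv (h ▸ hv)

lemma mem_csupp_of_adj {A : Set V} {c : (G.induce A).ConnectedComponent} {x y : V}
    (hx : x ∈ csupp c) (hy : y ∈ A) (hadj : G.Adj x y) : y ∈ csupp c := by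
  obtain ⟨hxA, rfl⟩ := mem_csupp.mp hx
  refine mem_csupp.mpr ⟨hy, ?_⟩
  exact (ConnectedComponent.connectedComponentMk_eq_of_adj
    (by simpa using hadj.symm : (G.induce A).Adj ⟨y, hy⟩ ⟨x, hxA⟩))

/-- Walk transfer: a walk staying inside `B` gives reachability in the graph induced on `B`. -/
lemma reachable_transfer {A B : Set V} {x y : ↑A} (p : (G.induce A).Walk x y)
    (hp : ∀ z ∈ p.support, (z : V) ∈ B) :
    (G.induce B).Reachable ⟨x, hp x p.start_mem_support⟩ ⟨y, hp y p.end_mem_support⟩ := by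
  induction p with
  | nil => rfl
  | @cons u v w h q ih =>
      have hu : (u : V) ∈ B := hp u (by simp)
      have hq : ∀ z ∈ q.support, (z : V) ∈ B := fun z hz => hp z (by simp [hz])
      have hadj : (G.induce B).Adj ⟨u, hu⟩ ⟨v, hq v q.start_mem_support⟩ := by
        simpa using (by simpa using h : G.Adj u v)
      exact (hadj.reachable).trans (ih hq)

lemma support_mem_csupp {A : Set V} {x y : ↑A} (p : (G.induce A).Walk x y)
    {z : ↑A} (hz : z ∈ p.support) :
    (z : V) ∈ csupp ((G.induce A).connectedComponentMk x) := by
  classical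
  have h : (G.induce A).Reachable x z := ⟨p.takeUntil z hz⟩
  exact mem_csupp.mpr ⟨z.2, ConnectedComponent.sound h.symm⟩

/-- Reachability within a component whose support lies in `B ⊆ A` transfers to `induce B`. -/
lemma reachable_shrink {A B : Set V} {x y : ↑A} (h : (G.induce A).Reachable x y)
    (hsub : csupp ((G.induce A).connectedComponentMk x) ⊆ B) :
    (G.induce B).Reachable
      ⟨x, hsub (mem_csupp_self _ x.2)⟩
      ⟨y, hsub (mem_csupp.mpr ⟨y.2, (ConnectedComponent.sound h.symm)⟩)⟩ := by
  obtain ⟨p⟩ := h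
  exact reachable_transfer p (fun z hz => hsub (support_mem_csupp p hz))

/-- Reachability is monotone under enlarging the induced set. -/
lemma reachable_mono {A B : Set V} (hAB : A ⊆ B) {x y : ↑A}
    (h : (G.induce A).Reachable x y) :
    (G.induce B).Reachable ⟨x, hAB x.2⟩ ⟨y, hAB y.2⟩ := by
  obtain ⟨p⟩ := h
  induction p with
  | nil => rfl
  | @cons u v w hadj q ih =>
      have hadj' : (G.induce B).Adj ⟨u, hAB u.2⟩ ⟨v, hAB v.2⟩ := by
        simpa using (by simpa using hadj : G.Adj u v)
      exact hadj'.reachable.trans ih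

/-- A nonempty, connected, closed subset of `B` is the support of a component of `induce B`. -/
lemma exists_comp_csupp_eq {B X : Set V} (hXB : X ⊆ B) {x0 : V} (hx0 : x0 ∈ X)
    (hconn : ∀ x (hx : x ∈ X), (G.induce B).Reachable ⟨x, hXB hx⟩ ⟨x0, hXB hx0⟩)
    (hcl : ∀ x ∈ X, ∀ y ∈ B, G.Adj x y → y ∈ X) :
    ∃ c : (G.induce B).ConnectedComponent, csupp c = X := by
  refine ⟨(G.induce B).connectedComponentMk ⟨x0, hXB hx0⟩, ?_⟩
  apply Set.eq_of_subset_of_subset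
  · rintro v hv
    obtain ⟨hvB, hc⟩ := mem_csupp.mp hv
    obtain ⟨p⟩ := (ConnectedComponent.exact hc).symm
    -- walk from x0 to v; show its end is in X by induction
    suffices h : ∀ {u w : ↑B}, (G.induce B).Walk u w → (u : V) ∈ X → (w : V) ∈ X by
      exact h p hx0
    intro u w p
    induction p with
    | nil => exact id
    | @cons a b c hadj q ih =>
        intro ha
        exact ih (hcl a ha b b.2 (by simpa using hadj))
  · intro x hx
    exact mem_csupp.mpr ⟨hXB hx, ConnectedComponent.sound (hconn x hx)⟩


section Counting

variable [Finite V]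

/-- Number of odd components of the graph induced on `A`. -/
noncomputable def oc (G : SimpleGraph V) (A : Set V) : ℕ :=
  {c : (G.induce A).ConnectedComponent | Odd (csupp c).ncard}.ncard

lemma filter_odd_card_mod {ι : Type*} [DecidableEq ι] (s : Finset ι) (f : ι → ℕ) :
    (s.filter (fun i => Odd (f i))).card % 2 = (∑ i ∈ s, f i) % 2 := by
  classical
  induction s using Finset.induction_on with
  | empty => simp
  | @insert a s ha ih =>
      rw [Finset.filter_insert, Finset.sum_insert ha]
      rcases Nat.even_or_odd (f a) with he | ho
      · rw [if_neg (by simpa using he)]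
        obtain ⟨k, hk⟩ := he
        omega
      · rw [if_pos ho, Finset.card_insert_of_notMem (by simp [ha])]
        obtain ⟨k, hk⟩ := ho
        omega

lemma csupp_ncard_eq (A : Set V) (c : (G.induce A).ConnectedComponent) :
    (csupp c).ncard = Nat.card c.supp := by
  rw [csupp, Set.ncard_image_of_injective _ Subtype.val_injective, Nat.card_coe_set_eq]

/-- The supports of the components partition `A`. -/
lemma sum_csupp_ncard (A : Set V) :
    letI : Fintype ((G.induce A).ConnectedComponent) := Fintype.ofFinite _
    ∑ c : (G.induce A).ConnectedComponent, (csupp c).ncard = A.ncard := by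
  letI : Fintype ((G.induce A).ConnectedComponent) := Fintype.ofFinite _
  have e : (Σ c : (G.induce A).ConnectedComponent, c.supp) ≃ A := {
    toFun := fun x => x.2.1
    invFun := fun a => ⟨(G.induce A).connectedComponentMk a, a,
      (ConnectedComponent.mem_supp_iff _ _).mpr rfl⟩
    left_inv := by
      rintro ⟨c, v, hv⟩
      obtain rfl := (ConnectedComponent.mem_supp_iff _ _).mp hv
      rfl
    right_inv := fun a => rfl }
  letI : ∀ c : (G.induce A).ConnectedComponent, Fintype c.supp := fun c => Fintype.ofFinite _
  have h1 : Fintype.card (Σ c : (G.induce A).ConnectedComponent, c.supp) = Nat.card A := by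
    rw [← Nat.card_eq_fintype_card]
    exact Nat.card_congr e
  rw [Fintype.card_sigma, Nat.card_coe_set_eq] at h1
  rw [← h1]
  refine Finset.sum_congr rfl fun c _ => ?_
  rw [csupp_ncard_eq A c, Nat.card_eq_fintype_card]

lemma oc_mod_two (A : Set V) : oc G A % 2 = A.ncard % 2 := by
  classical
  letI : Fintype ((G.induce A).ConnectedComponent) := Fintype.ofFinite _
  have h2 := sum_csupp_ncard (G := G) A
  rw [oc, ← h2, Set.ncard_eq_toFinset_card', Set.toFinset_setOf]
  exact filter_odd_card_mod _ _

/-- Move a component to the graph induced on another vertex set. -/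
lemma comp_move {A B : Set V} (c : (G.induce A).ConnectedComponent) (hsub : csupp c ⊆ B)
    (hreach : ∀ x (hx : x ∈ csupp c) y (hy : y ∈ csupp c),
      (G.induce B).Reachable ⟨x, hsub hx⟩ ⟨y, hsub hy⟩)
    (hcl : ∀ x ∈ csupp c, ∀ y ∈ B, G.Adj x y → y ∈ csupp c) :
    ∃ d : (G.induce B).ConnectedComponent, csupp d = csupp c := by
  obtain ⟨x0, hx0⟩ := csupp_nonempty c
  exact exists_comp_csupp_eq hsub hx0 (fun x hx => hreach x hx x0 hx0) hcl

/-- Shrinking case: `B ⊆ A` and the support of `c` stays inside `B`. -/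
lemma comp_move_shrink {A B : Set V} (hBA : B ⊆ A) (c : (G.induce A).ConnectedComponent)
    (hsub : csupp c ⊆ B)
    (hcl : ∀ x ∈ csupp c, ∀ y ∈ B, G.Adj x y → y ∈ csupp c) :
    ∃ d : (G.induce B).ConnectedComponent, csupp d = csupp c := by
  refine comp_move c hsub ?_ hcl
  intro x hx y hy
  obtain ⟨hxA, hcx⟩ := mem_csupp.mp hx
  obtain ⟨hyA, hcy⟩ := mem_csupp.mp hy
  have hr : (G.induce A).Reachable ⟨x, hxA⟩ ⟨y, hyA⟩ :=
    ConnectedComponent.exact (hcx.trans hcy.symm)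
  have hsub' : csupp ((G.induce A).connectedComponentMk ⟨x, hxA⟩) ⊆ B := by
    rw [hcx]; exact hsub
  exact reachable_shrink hr hsub'

/-- Growing case: `A ⊆ B`. -/
lemma comp_move_grow {A B : Set V} (hAB : A ⊆ B) (c : (G.induce A).ConnectedComponent)
    (hcl : ∀ x ∈ csupp c, ∀ y ∈ B, G.Adj x y → y ∈ csupp c) :
    ∃ d : (G.induce B).ConnectedComponent, csupp d = csupp c := by
  refine comp_move c (fun x hx => hAB (csupp_subset c hx)) ?_ hcl
  intro x hx y hy
  obtain ⟨hxA, hcx⟩ := mem_csupp.mp hx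
  obtain ⟨hyA, hcy⟩ := mem_csupp.mp hy
  exact reachable_mono hAB (ConnectedComponent.exact (hcx.trans hcy.symm))

lemma key2 {A B : Set V} (hAB : A ⊆ B) (T : Set ((G.induce A).ConnectedComponent))
    (hodd : ∀ c ∈ T, Odd (csupp c).ncard)
    (hcl : ∀ c ∈ T, ∀ x ∈ csupp c, ∀ y ∈ B, G.Adj x y → y ∈ csupp c) :
    T.ncard ≤ oc G B := by
  classical
  rcases T.eq_empty_or_nonempty with rfl | ⟨c1, hc1⟩
  · simp
  have hne : Nonempty ((G.induce B).ConnectedComponent) := by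
    obtain ⟨d, _⟩ := comp_move_grow hAB c1 (hcl c1 hc1)
    exact ⟨d⟩
  set g : (G.induce A).ConnectedComponent → (G.induce B).ConnectedComponent := fun c =>
    if h : ∃ d : (G.induce B).ConnectedComponent, csupp d = csupp c then h.choose
    else Classical.arbitrary _ with hg
  have hmaps : ∀ c ∈ T, csupp (g c) = csupp c := by
    intro c hc
    have h : ∃ d : (G.induce B).ConnectedComponent, csupp d = csupp c :=
      comp_move_grow hAB c (hcl c hc)
    rw [hg]; simp only [dif_pos h]; exact h.choose_spec
  refine Set.ncard_le_ncard_of_injOn g (fun c hc => ?_) (fun c hc c' hc' hcc => ?_)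
    (Set.toFinite _)
  · show Odd (csupp (g c)).ncard
    rw [hmaps c hc]; exact hodd c hc
  · exact csupp_injective ((hmaps c hc).symm.trans (hcc ▸ hmaps c' hc'))

/-- The key counting estimate: removing `Z ⊆ csupp c₀` from `A` keeps all other odd
components and creates at least `oc G (csupp c₀ \ Z)` odd components. -/
lemma key {A : Set V} (c0 : (G.induce A).ConnectedComponent) {Z : Set V}
    (hZ : Z ⊆ csupp c0) :
    {c : (G.induce A).ConnectedComponent | Odd (csupp c).ncard ∧ c ≠ c0}.ncard
      + oc G (csupp c0 \ Z) ≤ oc G (A \ Z) := by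
  classical
  set D := csupp c0 \ Z with hD
  set B := A \ Z with hB
  have hDB : D ⊆ B := fun x hx => ⟨csupp_subset c0 hx.1, hx.2⟩
  -- moving components of `A` other than `c0`
  have move1 : ∀ c : (G.induce A).ConnectedComponent, c ≠ c0 →
      ∃ d : (G.induce B).ConnectedComponent, csupp d = csupp c := by
    intro c hc
    refine comp_move_shrink (Set.diff_subset) c ?_ ?_
    · intro x hx
      exact ⟨csupp_subset c hx, fun hxZ => (csupp_disjoint hc).le_bot ⟨hx, hZ hxZ⟩⟩
    · intro x hx y hy hadj
      exact mem_csupp_of_adj hx hy.1 hadj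
  -- moving components of `D`
  have move2 : ∀ d' : (G.induce D).ConnectedComponent,
      ∃ d : (G.induce B).ConnectedComponent, csupp d = csupp d' := by
    intro d'
    refine comp_move_grow hDB d' ?_
    intro x hx y hy hadj
    have hxD : x ∈ D := csupp_subset d' hx
    have hyc0 : y ∈ csupp c0 := mem_csupp_of_adj hxD.1 hy.1 hadj
    have hyD : y ∈ D := ⟨hyc0, hy.2⟩
    exact mem_csupp_of_adj hx hyD hadj
  rcases isEmpty_or_nonempty ((G.induce B).ConnectedComponent) with hemp | hne
  · -- then both sets on the left are empty
    have h1 : {c : (G.induce A).ConnectedComponent | Odd (csupp c).ncard ∧ c ≠ c0} = ∅ := by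
      ext c
      simp only [Set.mem_setOf_eq, Set.mem_empty_iff_false, iff_false, not_and]
      intro _ hc
      obtain ⟨d, _⟩ := move1 c hc
      exact hemp.false d
    have h2 : oc G D = 0 := by
      rw [oc, Set.ncard_eq_zero (Set.toFinite _)]
      ext d'
      simp only [Set.mem_setOf_eq, Set.mem_empty_iff_false, iff_false]
      intro _
      obtain ⟨d, _⟩ := move2 d'
      exact hemp.false d
    rw [h1, h2]
    simp
  set g1 : (G.induce A).ConnectedComponent → (G.induce B).ConnectedComponent := fun c =>
    if h : ∃ d : (G.induce B).ConnectedComponent, csupp d = csupp c then h.choose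
    else Classical.arbitrary _ with hg1
  set g2 : (G.induce D).ConnectedComponent → (G.induce B).ConnectedComponent := fun c =>
    if h : ∃ d : (G.induce B).ConnectedComponent, csupp d = csupp c then h.choose
    else Classical.arbitrary _ with hg2
  set S1 := {c : (G.induce A).ConnectedComponent | Odd (csupp c).ncard ∧ c ≠ c0} with hS1
  set S2 := {d' : (G.induce D).ConnectedComponent | Odd (csupp d').ncard} with hS2
  have hg1supp : ∀ c ∈ S1, csupp (g1 c) = csupp c := by
    intro c hc
    have h := move1 c hc.2
    rw [hg1]; simp only [dif_pos h]; exact h.choose_spec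
  have hg2supp : ∀ d' , csupp (g2 d') = csupp d' := by
    intro d'
    have h := move2 d'
    rw [hg2]; simp only [dif_pos h]; exact h.choose_spec
  set T1 := g1 '' S1 with hT1
  set T2 := g2 '' S2 with hT2
  have hinj1 : Set.InjOn g1 S1 := by
    intro c hc c' hc' hcc
    exact csupp_injective ((hg1supp c hc).symm.trans (hcc ▸ hg1supp c' hc'))
  have hinj2 : Set.InjOn g2 S2 := by
    intro c hc c' hc' hcc
    exact csupp_injective ((hg2supp c).symm.trans (hcc ▸ hg2supp c'))
  have hdisj : Disjoint T1 T2 := by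
    rw [Set.disjoint_left]
    rintro d ⟨c, hc, rfl⟩ ⟨d', hd', hd'eq⟩
    have h1 : csupp (g1 c) = csupp c := hg1supp c hc
    have h2 : csupp (g1 c) = csupp d' := by rw [← hd'eq]; exact hg2supp d'
    obtain ⟨v, hv⟩ := csupp_nonempty c
    have hvD : v ∈ csupp d' := by rw [← h2, h1]; exact hv
    have hvc0 : v ∈ csupp c0 := (csupp_subset d' hvD).1
    exact (csupp_disjoint hc.2).le_bot ⟨hv, hvc0⟩
  have hsub : T1 ∪ T2 ⊆ {d : (G.induce B).ConnectedComponent | Odd (csupp d).ncard} := by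
    rintro d (⟨c, hc, rfl⟩ | ⟨d', hd', rfl⟩)
    · show Odd (csupp (g1 c)).ncard; rw [hg1supp c hc]; exact hc.1
    · show Odd (csupp (g2 d')).ncard; rw [hg2supp d']; exact hd'
  calc S1.ncard + oc G D
      = T1.ncard + T2.ncard := by
        rw [hT1, hT2, Set.ncard_image_of_injOn hinj1, Set.ncard_image_of_injOn hinj2]
        rfl
    _ = (T1 ∪ T2).ncard := (Set.ncard_union_eq hdisj (Set.toFinite _) (Set.toFinite _)).symm
    _ ≤ oc G B := Set.ncard_le_ncard hsub (Set.toFinite _)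

end Counting


section Tutte

variable [Fintype V]

theorem tutte_aux (G : SimpleGraph V) : ∀ (n : ℕ) (s : Set V), s.ncard ≤ n →
    (∀ W ⊆ s, oc G (s \ W) ≤ W.ncard) →
    ∃ M : G.Subgraph, M.IsMatching ∧ M.verts = s := by
  intro n
  induction n with
  | zero =>
      intro s hs _
      have hse : s = ∅ := by
        rw [← Set.ncard_eq_zero (Set.toFinite s)]; omega
      subst hse
      exact ⟨⊥, fun v hv => absurd hv (by simp), by simp⟩
  | succ n ih =>
      intro s hsn hT
      rcases s.eq_empty_or_nonempty with rfl | hsne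
      · exact ⟨⊥, fun v hv => absurd hv (by simp), by simp⟩
      classical
      set 𝒮 : Set (Set V) := {W | W ⊆ s ∧ oc G (s \ W) = W.ncard} with h𝒮
      have hmem : (∅ : Set V) ∈ 𝒮 := by
        refine ⟨Set.empty_subset s, ?_⟩
        have h0 := hT ∅ (Set.empty_subset s)
        simpa using h0
      obtain ⟨W, hW, hWmax⟩ :=
        Set.Finite.exists_maximalFor Set.ncard 𝒮 (Set.toFinite _) ⟨∅, hmem⟩
      obtain ⟨hWs, hWoc⟩ := hW
      set A := s \ W with hA
      have hWmax' : ∀ Z, Z ⊆ s → Disjoint W Z → Z.Nonempty →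
          oc G (s \ (W ∪ Z)) ≠ (W ∪ Z).ncard := by
        intro Z hZs hdisj hZne h
        have hmem2 : W ∪ Z ∈ 𝒮 := ⟨Set.union_subset hWs hZs, h⟩
        have hle : W.ncard ≤ (W ∪ Z).ncard :=
          Set.ncard_le_ncard Set.subset_union_left (Set.toFinite _)
        have heq := hWmax hmem2 hle
        rw [Set.ncard_union_eq hdisj (Set.toFinite _) (Set.toFinite _)] at heq
        have hZ0 : Z.ncard ≠ 0 := fun h0 =>
          (Set.nonempty_iff_ne_empty.mp hZne) ((Set.ncard_eq_zero (Set.toFinite Z)).mp h0)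
        omega
      -- Claim 1 : all components of `induce A` have odd support
      have hodd : ∀ c : (G.induce A).ConnectedComponent, Odd (csupp c).ncard := by
        intro c
        by_contra hev
        rw [Nat.not_odd_iff_even] at hev
        obtain ⟨v, hv⟩ := csupp_nonempty c
        have hvA : v ∈ A := csupp_subset c hv
        have hZ : ({v} : Set V) ⊆ csupp c := by simpa using hv
        have hkey := key (G := G) c hZ
        have hS1 : {d : (G.induce A).ConnectedComponent | Odd (csupp d).ncard ∧ d ≠ c}
            = {d : (G.induce A).ConnectedComponent | Odd (csupp d).ncard} := by
          ext d
          simp only [Set.mem_setOf_eq, and_iff_left_iff_imp]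
          rintro hd rfl
          exact (Nat.not_odd_iff_even.mpr hev) hd
        rw [hS1] at hkey
        have hWA : {d : (G.induce A).ConnectedComponent | Odd (csupp d).ncard}.ncard
            = W.ncard := hWoc
        have hoc1 : 1 ≤ oc G (csupp c \ {v}) := by
          have hp := oc_mod_two (G := G) (csupp c \ {v})
          rw [Set.ncard_diff_singleton_of_mem hv] at hp
          have h1 : (csupp c).ncard % 2 = 0 := Nat.even_iff.mp hev
          have h2 : 1 ≤ (csupp c).ncard := (Set.ncard_pos (Set.toFinite _)).mpr ⟨v, hv⟩
          omega
        have hsub : A \ {v} = s \ (W ∪ {v}) := by rw [hA, Set.diff_diff]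
        have hvs : v ∈ s := hvA.1
        have hdisj : Disjoint W ({v} : Set V) := by
          simpa using hvA.2
        have hub := hT (W ∪ {v}) (Set.union_subset hWs (by simpa using hvs))
        have hcard : (W ∪ {v}).ncard = W.ncard + 1 := by
          rw [Set.ncard_union_eq hdisj (Set.toFinite _) (Set.toFinite _)]
          simp
        refine hWmax' {v} (by simpa using hvs) hdisj ⟨v, rfl⟩ ?_
        rw [← hsub] at hub ⊢
        omega
      -- number of components equals `W.ncard`
      letI : Fintype ((G.induce A).ConnectedComponent) := Fintype.ofFinite _
      have hcompcard : Nat.card ((G.induce A).ConnectedComponent) = W.ncard := by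
        rw [← hWoc]
        show _ = oc G A
        rw [oc]
        have huniv : {c : (G.induce A).ConnectedComponent | Odd (csupp c).ncard}
            = Set.univ := Set.eq_univ_of_forall hodd
        rw [huniv, Set.ncard_univ]
      -- Hall's condition
      set t : (G.induce A).ConnectedComponent → Finset V := fun c =>
        Finset.univ.filter (fun w => w ∈ W ∧ ∃ x ∈ csupp c, G.Adj x w) with ht
      have hHall : ∀ u : Finset ((G.induce A).ConnectedComponent),
          u.card ≤ (u.biUnion t).card := by
        intro u
        set W₂ : Set V := ↑(u.biUnion t) with hW₂
        have hW₂W : W₂ ⊆ W := by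
          intro w hw
          rw [hW₂] at hw
          simp only [Finset.coe_biUnion, Set.mem_iUnion, Finset.mem_coe,
            Finset.mem_biUnion] at hw
          obtain ⟨c, _, hc⟩ := hw
          rw [ht] at hc
          simp only [Finset.mem_filter] at hc
          exact hc.2.1
        have hW₂s : W₂ ⊆ s := hW₂W.trans hWs
        have hAB : A ⊆ s \ W₂ := Set.diff_subset_diff_right hW₂W
        have hkey2 := key2 (G := G) hAB (T := ↑u) (fun c _ => hodd c) ?_
        · calc u.card = (↑u : Set ((G.induce A).ConnectedComponent)).ncard :=
              (Set.ncard_coe_finset u).symm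
            _ ≤ oc G (s \ W₂) := hkey2
            _ ≤ W₂.ncard := hT W₂ hW₂s
            _ = (u.biUnion t).card := Set.ncard_coe_finset _
        · intro c hc x hx y hy hadj
          by_cases hyW : y ∈ W
          · exfalso
            apply hy.2
            rw [hW₂]
            simp only [Finset.coe_biUnion, Set.mem_iUnion, Finset.mem_coe]
            refine ⟨c, hc, ?_⟩
            rw [ht]
            simp only [Finset.mem_filter, Finset.mem_univ, true_and]
            exact ⟨hyW, x, hx, hadj⟩
          · exact mem_csupp_of_adj hx ⟨hy.1, hyW⟩ hadj
      obtain ⟨f, hfinj, hft⟩ := (Finset.all_card_le_biUnion_card_iff_exists_injective t).mp hHall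
      have hfW : ∀ c, f c ∈ W ∧ ∃ x ∈ csupp c, G.Adj x (f c) := by
        intro c
        have := hft c
        rw [ht] at this
        simpa using this
      have hfsurj : ∀ w ∈ W, ∃ c, f c = w := by
        intro w hw
        set f' : (G.induce A).ConnectedComponent → ↥W := fun c => ⟨f c, (hfW c).1⟩ with hf'
        have hinj' : Function.Injective f' := fun a b h => hfinj (congrArg Subtype.val h)
        have hcard : Fintype.card ((G.induce A).ConnectedComponent) = Fintype.card ↥W := by
          rw [← Nat.card_eq_fintype_card, ← Nat.card_eq_fintype_card, hcompcard,
            Nat.card_coe_set_eq]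
        have hbij := (Fintype.bijective_iff_injective_and_card f').mpr ⟨hinj', hcard⟩
        obtain ⟨c, hc⟩ := hbij.2 ⟨w, hw⟩
        exact ⟨c, congrArg Subtype.val hc⟩
      choose xc hxc hxcadj using fun c => (hfW c).2
      -- the inductive hypothesis applies to each component minus its attachment vertex
      have hIH : ∀ c : (G.induce A).ConnectedComponent,
          ∃ M : G.Subgraph, M.IsMatching ∧ M.verts = csupp c \ {xc c} := by
        intro c
        have hcsubs : csupp c ⊆ s := (csupp_subset c).trans Set.diff_subset
        have hxcs : xc c ∈ s := hcsubs (hxc c)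
        apply ih
        · have h1 : csupp c \ {xc c} ⊆ s \ {xc c} :=
            Set.diff_subset_diff_left hcsubs
          have h2 : (csupp c \ {xc c}).ncard ≤ (s \ {xc c}).ncard :=
            Set.ncard_le_ncard h1 (Set.toFinite _)
          rw [Set.ncard_diff_singleton_of_mem hxcs] at h2
          have : 1 ≤ s.ncard := (Set.ncard_pos (Set.toFinite _)).mpr hsne
          omega
        · intro W' hW'sub
          by_contra hgt
          push_neg at hgt
          have hxcc : xc c ∈ csupp c := hxc c
          set D := (csupp c \ {xc c}) \ W' with hDdef
          have hp := oc_mod_two (G := G) D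
          have hW'fin := Set.toFinite W'
          have hDcard : D.ncard = (csupp c).ncard - 1 - W'.ncard := by
            rw [hDdef, Set.ncard_diff hW'sub (Set.toFinite _),
              Set.ncard_diff_singleton_of_mem hxcc]
          have hW'le : W'.ncard ≤ (csupp c).ncard - 1 := by
            have := Set.ncard_le_ncard hW'sub (Set.toFinite _)
            rw [Set.ncard_diff_singleton_of_mem hxcc] at this
            exact this
          have hoddc := hodd c
          rw [Nat.odd_iff] at hoddc
          have hoc2 : W'.ncard + 2 ≤ oc G D := by omega
          have hZsub : {xc c} ∪ W' ⊆ csupp c :=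
            Set.union_subset (by simpa using hxcc) (hW'sub.trans Set.diff_subset)
          have hkey := key (G := G) c hZsub
          have hne : Nonempty ((G.induce A).ConnectedComponent) := ⟨c⟩
          have hS1 : {d : (G.induce A).ConnectedComponent | Odd (csupp d).ncard ∧ d ≠ c}.ncard
              + 1 = W.ncard := by
            have heq : {d : (G.induce A).ConnectedComponent | Odd (csupp d).ncard ∧ d ≠ c}
                = Set.univ \ {c} := by
              ext d
              simp [hodd d]
            rw [heq, Set.ncard_diff (by simp) (Set.toFinite _), Set.ncard_univ,
              Set.ncard_singleton, hcompcard]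
            have h1 : 1 ≤ W.ncard := by
              rw [← hcompcard]
              have : 0 < Nat.card ((G.induce A).ConnectedComponent) := Nat.card_pos
              omega
            omega
          have hCZ : csupp c \ ({xc c} ∪ W') = D := by
            rw [hDdef, Set.diff_diff]
          have hAZ : A \ ({xc c} ∪ W') = s \ (W ∪ ({xc c} ∪ W')) := by
            rw [hA, Set.diff_diff]
          rw [hCZ, hAZ] at hkey
          have hZs : {xc c} ∪ W' ⊆ s := hZsub.trans hcsubs
          have hZA : {xc c} ∪ W' ⊆ A := hZsub.trans (csupp_subset c)
          have hdisjWZ : Disjoint W ({xc c} ∪ W') := by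
            rw [Set.disjoint_left]
            intro w hwW hwZ
            exact (hZA hwZ).2 hwW
          have hub := hT (W ∪ ({xc c} ∪ W')) (Set.union_subset hWs hZs)
          have hxcW' : xc c ∉ W' := fun h => (hW'sub h).2 rfl
          have hucard : ({xc c} ∪ W' : Set V).ncard = 1 + W'.ncard := by
            rw [Set.ncard_union_eq (by simpa using hxcW') (Set.toFinite _) (Set.toFinite _),
              Set.ncard_singleton]
          have hucard2 : (W ∪ ({xc c} ∪ W')).ncard = W.ncard + (1 + W'.ncard) := by
            rw [Set.ncard_union_eq hdisjWZ (Set.toFinite _) (Set.toFinite _), hucard]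
          refine hWmax' ({xc c} ∪ W') hZs hdisjWZ ⟨xc c, Or.inl rfl⟩ ?_
          omega
      choose Mc hMc hMcverts using hIH
      set P : (G.induce A).ConnectedComponent → G.Subgraph := fun c =>
        Mc c ⊔ G.subgraphOfAdj (hxcadj c) with hP
      have hfnotA : ∀ c, f c ∉ A := fun c h => h.2 (hfW c).1
      have hPmatch : ∀ c, (P c).IsMatching := by
        intro c
        refine (hMc c).sup (Subgraph.IsMatching.subgraphOfAdj _) ?_
        rw [(hMc c).support_eq_verts, hMcverts, support_subgraphOfAdj]
        rw [Set.disjoint_left]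
        intro z hz hz2
        rcases hz2 with rfl | rfl
        · exact hz.2 rfl
        · exact hfnotA c (csupp_subset c hz.1)
      have hPverts : ∀ c, (P c).verts = csupp c ∪ {f c} := by
        intro c
        rw [hP]
        simp only [Subgraph.verts_sup, hMcverts, subgraphOfAdj_verts]
        ext z
        constructor
        · rintro (⟨h1, _⟩ | h2)
          · exact Or.inl h1
          · rcases h2 with rfl | rfl
            · exact Or.inl (hxc c)
            · exact Or.inr rfl
        · rintro (h1 | rfl)
          · by_cases hzx : z = xc c
            · subst hzx; exact Or.inr (by simp)
            · exact Or.inl ⟨h1, hzx⟩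
          · exact Or.inr (by simp)
      have hPsupport : ∀ c, (P c).support = csupp c ∪ {f c} := by
        intro c
        rw [(hPmatch c).support_eq_verts, hPverts]
      refine ⟨⨆ c, P c, Subgraph.IsMatching.iSup hPmatch ?_, ?_⟩
      · intro c c' hcc
        rw [hPsupport, hPsupport]
        rw [Set.disjoint_left]
        rintro z (hz | rfl) hz2
        · rcases hz2 with hz2 | rfl
          · exact (csupp_disjoint hcc).le_bot ⟨hz, hz2⟩ |>.elim
          · exact hfnotA c' (csupp_subset c hz)
        · rcases hz2 with hz2 | hfcc
          · exact hfnotA c (csupp_subset c' hz2)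
          · exact (hcc (hfinj hfcc)).elim
      · rw [Subgraph.verts_iSup]
        ext z
        simp only [Set.mem_iUnion]
        constructor
        · rintro ⟨c, hc⟩
          rw [hPverts] at hc
          rcases hc with hc | rfl
          · exact (csupp_subset c hc).1
          · exact hWs (hfW c).1
        · intro hzs
          by_cases hzW : z ∈ W
          · obtain ⟨c, hc⟩ := hfsurj z hzW
            exact ⟨c, by rw [hPverts]; exact Or.inr (by simp [hc])⟩
          · have hzA : z ∈ A := ⟨hzs, hzW⟩
            exact ⟨(G.induce A).connectedComponentMk ⟨z, hzA⟩,
              by rw [hPverts]; exact Or.inl (mem_csupp_self z hzA)⟩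

end Tutte

end TF




namespace TFM

open scoped Classical

variable {V E : Type*} [Fintype V] [Fintype E]

lemma sym2_rep {α : Type*} (q : Sym2 α) : ∃ a b, q = s(a, b) :=
  Sym2.ind (fun a b => ⟨a, b, rfl⟩) q

/-- The set of endpoints of an edge. -/
def endpts (M : Multigraph V E) (e : E) : Set V := {v | v ∈ M.ends e}

variable {M : Multigraph V E}

lemma exists_ends (M : Multigraph V E) (e : E) : ∃ a b : V, a ≠ b ∧ M.ends e = s(a, b) := by
  obtain ⟨a, b, hab⟩ := sym2_rep (M.ends e)
  refine ⟨a, b, fun h => M.loopless e ?_, hab⟩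
  rw [hab, h, Sym2.mk_isDiag_iff]

lemma endpts_pair {e : E} {a b : V} (h : M.ends e = s(a, b)) :
    endpts M e = {a, b} := by
  ext v
  simp [endpts, h, Sym2.mem_iff]

lemma endpts_ncard (M : Multigraph V E) (e : E) : (endpts M e).ncard = 2 := by
  obtain ⟨a, b, hne, hab⟩ := exists_ends M e
  rw [endpts_pair hab, Set.ncard_pair hne]

lemma degree_eq_card (M : Multigraph V E) (v : V) :
    M.degree v = (Finset.univ.filter (fun e : E => v ∈ M.ends e)).card := by
  rw [Multigraph.degree, Set.ncard_eq_toFinset_card']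
  congr 1
  ext e
  simp

/-- Handshake identity restricted to a set `C` of vertices. -/
lemma sum_deg (M : Multigraph V E) (C : Set V) :
    ∑ v ∈ C.toFinset, M.degree v = ∑ e : E, (C ∩ endpts M e).ncard := by
  classical
  have h2 : ∀ e : E, (C ∩ endpts M e).ncard
      = (C.toFinset.filter (fun v => v ∈ M.ends e)).card := by
    intro e
    rw [Set.ncard_eq_toFinset_card']
    congr 1
    ext v
    rw [Set.mem_toFinset]
    simp [endpts]
  simp only [degree_eq_card M, h2, Finset.card_filter]
  exact Finset.sum_comm

/-- The boundary of a set `C` of vertices: edges with exactly one endpoint in `C`. -/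
def bnd (M : Multigraph V E) (C : Set V) : Set E :=
  {e | (C ∩ endpts M e).ncard = 1}

lemma bnd_parity (hcubic : M.IsCubic) (C : Set V) :
    (bnd M C).ncard % 2 = C.ncard % 2 := by
  classical
  have hk2 : ∀ e : E, (C ∩ endpts M e).ncard ≤ 2 := by
    intro e
    have := Set.ncard_le_ncard (Set.inter_subset_right : C ∩ endpts M e ⊆ endpts M e) (Set.toFinite _)
    rwa [endpts_ncard M e] at this
  have hsum := sum_deg M C
  have hL : ∑ v ∈ C.toFinset, M.degree v = 3 * C.ncard := by
    rw [Finset.sum_congr rfl (fun v _ => hcubic v), Finset.sum_const,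
      ← Set.ncard_eq_toFinset_card']
    ring
  have hR : (∑ e : E, (C ∩ endpts M e).ncard) % 2
      = (Finset.univ.filter (fun e : E => (C ∩ endpts M e).ncard = 1)).card % 2 := by
    rw [Finset.sum_nat_mod, Finset.card_filter]
    congr 1
    refine Finset.sum_congr rfl (fun e _ => ?_)
    have := hk2 e
    by_cases h : (C ∩ endpts M e).ncard = 1
    · simp [h]
    · interval_cases h' : (C ∩ endpts M e).ncard <;> simp_all
  have hbnd : (bnd M C).ncard
      = (Finset.univ.filter (fun e : E => (C ∩ endpts M e).ncard = 1)).card := by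
    rw [Set.ncard_eq_toFinset_card']
    congr 1
    ext e
    rw [Set.mem_toFinset]
    simp [bnd]
  rw [hbnd, ← hR, ← hsum, hL]
  omega

lemma bnd_struct {C : Set V} {e : E} (h : e ∈ bnd M C) :
    ∃ a b, M.ends e = s(a, b) ∧ a ∈ C ∧ b ∉ C ∧ a ≠ b := by
  obtain ⟨a, b, hne, hab⟩ := exists_ends M e
  have hpair := endpts_pair hab
  have h1 : (C ∩ endpts M e).ncard = 1 := h
  by_cases ha : a ∈ C <;> by_cases hb : b ∈ C
  · exfalso
    rw [hpair, Set.inter_eq_right.mpr (by rintro x (rfl | rfl) <;> assumption),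
      Set.ncard_pair hne] at h1
    omega
  · exact ⟨a, b, hab, ha, hb, hne⟩
  · exact ⟨b, a, hab.trans Sym2.eq_swap, hb, ha, hne.symm⟩
  · exfalso
    have hempty : C ∩ endpts M e = ∅ := by
      rw [hpair]
      ext x
      simp only [Set.mem_inter_iff, Set.mem_insert_iff, Set.mem_singleton_iff,
        Set.mem_empty_iff_false, iff_false, not_and]
      rintro hx (rfl | rfl) <;> simp_all
    rw [hempty, Set.ncard_empty] at h1
    omega

lemma mem_bnd {C : Set V} {e : E} {a b : V} (hab : M.ends e = s(a, b))
    (ha : a ∈ C) (hb : b ∉ C) : e ∈ bnd M C := by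
  have hne : a ≠ b := by
    intro h
    exact M.loopless e (by rw [hab, h]; exact Sym2.mk_isDiag_iff.mpr rfl)
  show (C ∩ endpts M e).ncard = 1
  rw [endpts_pair hab]
  have : C ∩ {a, b} = {a} := by
    ext x
    constructor
    · rintro ⟨hx, rfl | rfl⟩
      · rfl
      · exact absurd hx hb
    · rintro rfl
      exact ⟨ha, Or.inl rfl⟩
  rw [this, Set.ncard_singleton]

lemma connects_symm {S : Set E} {u v : V} (h : M.Connects S u v) : M.Connects S v u := by
  refine (@Relation.ReflTransGen.symmetric _ _ ⟨?_⟩).symm _ _ h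
  rintro a b ⟨e, he, hab⟩
  exact ⟨e, he, hab.trans Sym2.eq_swap⟩

lemma crossing {C : Set V} {S : Set E} {u v : V} (h : M.Connects S u v)
    (hu : u ∈ C) (hv : v ∉ C) : ∃ g ∈ S, g ∈ bnd M C := by
  induction h with
  | refl => exact absurd hu hv
  | @tail b c hab step ih =>
      by_cases hb : b ∈ C
      · obtain ⟨g, hgS, hg⟩ := step
        exact ⟨g, hgS, mem_bnd hg hb hv⟩
      · exact ih hb

lemma bnd_ne_one (hbridgeless : ∀ e : E, ¬ M.IsBridge e) (C : Set V) :
    (bnd M C).ncard ≠ 1 := by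
  classical
  intro h1
  obtain ⟨f, hf⟩ := Set.ncard_eq_one.mp h1
  have hfmem : f ∈ bnd M C := by rw [hf]; rfl
  obtain ⟨a, b, hab, ha, hb, hne⟩ := bnd_struct hfmem
  have := hbridgeless f
  rw [Multigraph.IsBridge] at this
  push_neg at this
  obtain ⟨p, q, hpq, hconn⟩ := this
  have hpq' : (p = a ∧ q = b) ∨ (p = b ∧ q = a) := by
    have := hpq.symm.trans hab
    rwa [Sym2.eq_iff] at this
  have hconn' : M.Connects {e' | e' ≠ f} a b := by
    rcases hpq' with ⟨rfl, rfl⟩ | ⟨rfl, rfl⟩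
    · exact hconn
    · exact connects_symm hconn
  obtain ⟨g, hgS, hg⟩ := crossing hconn' ha hb
  have : g = f := by rw [← Set.mem_singleton_iff, ← hf]; exact hg
  exact hgS this


/-- The simple graph underlying `M` with the edge `e0` removed. -/
def HG (M : Multigraph V E) (e0 : E) : SimpleGraph V where
  Adj u v := ∃ e, e ≠ e0 ∧ M.ends e = s(u, v)
  symm := by
    refine ⟨?_⟩
    rintro u v ⟨e, he, hab⟩
    exact ⟨e, he, hab.trans Sym2.eq_swap⟩
  loopless := by
    refine ⟨?_⟩
    rintro v ⟨e, he, hab⟩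
    exact M.loopless e (by rw [hab]; exact Sym2.mk_isDiag_iff.mpr rfl)

lemma plesnik (M : Multigraph V E) (hbridgeless : ∀ e : E, ¬ M.IsBridge e)
    (hcubic : M.IsCubic) (e0 : E) (S : Set V) :
    TF.oc (HG M e0) (Set.univ \ S) ≤ S.ncard := by
  classical
  set H := HG M e0 with hH
  set A : Set V := Set.univ \ S with hAdef
  letI : Fintype ((H.induce A).ConnectedComponent) := Fintype.ofFinite _
  set T : Finset ((H.induce A).ConnectedComponent) :=
    Finset.univ.filter (fun c => Odd (TF.csupp c).ncard) with hT
  have hoc : TF.oc H A = T.card := by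
    rw [TF.oc, Set.ncard_eq_toFinset_card']
    congr 1
    ext c
    simp [hT]
  have hbnd3 : ∀ c ∈ T, 3 ≤ (bnd M (TF.csupp c)).ncard := by
    intro c hc
    have hcodd : Odd (TF.csupp c).ncard := by simpa [hT] using hc
    have hp := bnd_parity (M := M) hcubic (TF.csupp c)
    have hne1 := bnd_ne_one (M := M) hbridgeless (TF.csupp c)
    rw [Nat.odd_iff] at hcodd
    omega
  have hstruct : ∀ c : (H.induce A).ConnectedComponent, ∀ g ∈ bnd M (TF.csupp c), g ≠ e0 →
      ∃ a b, M.ends g = s(a, b) ∧ a ∈ TF.csupp c ∧ b ∈ S := by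
    intro c g hg hge0
    obtain ⟨a, b, hab, ha, hb, hne⟩ := bnd_struct hg
    refine ⟨a, b, hab, ha, ?_⟩
    by_contra hbS
    have hbA : b ∈ A := ⟨Set.mem_univ b, hbS⟩
    have hadj : H.Adj a b := ⟨g, hge0, hab⟩
    exact hb (TF.mem_csupp_of_adj ha hbA hadj)
  set Sedges : Set E := {g | ∃ v ∈ S, v ∈ M.ends g} with hSedges
  have hsubS : ∀ c : (H.induce A).ConnectedComponent,
      bnd M (TF.csupp c) \ {e0} ⊆ Sedges := by
    rintro c g ⟨hg, hge0⟩
    obtain ⟨a, b, hab, _, hbS⟩ := hstruct c g hg (by simpa using hge0)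
    exact ⟨b, hbS, by rw [hab]; simp⟩
  have hdisjbnd : ∀ c c' : (H.induce A).ConnectedComponent, c ≠ c' →
      Disjoint (bnd M (TF.csupp c) \ {e0}) (bnd M (TF.csupp c') \ {e0}) := by
    intro c c' hcc
    rw [Set.disjoint_left]
    rintro g ⟨hg, hge0⟩ ⟨hg', _⟩
    have hge0' : g ≠ e0 := by simpa using hge0
    obtain ⟨a, b, hab, ha, hbS⟩ := hstruct c g hg hge0'
    obtain ⟨a', b', hab', ha', hbS'⟩ := hstruct c' g hg' hge0'
    have h1 : ({a', b'} : Set V) = {a, b} :=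
      (endpts_pair hab').symm.trans (endpts_pair hab)
    have ha'mem : a' ∈ ({a, b} : Set V) := h1 ▸ Set.mem_insert a' {b'}
    rcases ha'mem with h | h
    · subst h
      exact hcc (TF.comp_eq_of_mem_csupp ha ha')
    · rw [Set.mem_singleton_iff] at h
      subst h
      exact (TF.csupp_subset c' ha').2 hbS
  have hsum1 : ∑ c ∈ T, (bnd M (TF.csupp c) \ {e0}).ncard ≤ Sedges.ncard := by
    rw [Finset.sum_congr rfl (fun c _ => Set.ncard_eq_toFinset_card' _)]
    rw [← Finset.card_biUnion (fun c _ c' _ hcc =>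
      Set.disjoint_toFinset.mpr (hdisjbnd c c' hcc))]
    rw [Set.ncard_eq_toFinset_card' Sedges]
    apply Finset.card_le_card
    intro g hg
    obtain ⟨c, _, hgc⟩ := Finset.mem_biUnion.mp hg
    rw [Set.mem_toFinset] at hgc ⊢
    exact hsubS c hgc
  have hsum2 : ∑ c ∈ T, (bnd M (TF.csupp c) ∩ {e0}).ncard ≤ 2 := by
    have hterm : ∀ c : (H.induce A).ConnectedComponent,
        (bnd M (TF.csupp c) ∩ {e0}).ncard
          = if e0 ∈ bnd M (TF.csupp c) then 1 else 0 := by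
      intro c
      by_cases h : e0 ∈ bnd M (TF.csupp c)
      · rw [if_pos h]
        have : bnd M (TF.csupp c) ∩ {e0} = {e0} := by
          ext x
          constructor
          · rintro ⟨_, hx⟩; exact hx
          · rintro rfl; exact ⟨h, rfl⟩
        rw [this, Set.ncard_singleton]
      · rw [if_neg h]
        have : bnd M (TF.csupp c) ∩ {e0} = ∅ := by
          ext x
          simp only [Set.mem_inter_iff, Set.mem_singleton_iff, Set.mem_empty_iff_false,
            iff_false, not_and]
          rintro hx rfl
          exact h hx
        rw [this, Set.ncard_empty]
    rw [Finset.sum_congr rfl (fun c _ => hterm c), ← Finset.card_filter]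
    have hV : Nonempty V := by
      obtain ⟨a, b, _, _⟩ := exists_ends M e0
      exact ⟨a⟩
    set P := T.filter (fun c => e0 ∈ bnd M (TF.csupp c)) with hPdef
    set g : (H.induce A).ConnectedComponent → V := fun c =>
      if h : ∃ x, x ∈ TF.csupp c ∩ endpts M e0 then h.choose else Classical.arbitrary V with hgdef
    have hg : ∀ c ∈ P, g c ∈ TF.csupp c ∩ endpts M e0 := by
      intro c hc
      have h1 : (TF.csupp c ∩ endpts M e0).ncard = 1 := (Finset.mem_filter.mp hc).2
      obtain ⟨x, hx⟩ := Set.ncard_eq_one.mp h1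
      have hex : ∃ x, x ∈ TF.csupp c ∩ endpts M e0 := ⟨x, by rw [hx]; rfl⟩
      rw [hgdef]
      simp only [dif_pos hex]
      exact hex.choose_spec
    have hcard : ((P : Set ((H.induce A).ConnectedComponent))).ncard
        ≤ (endpts M e0).ncard := by
      refine Set.ncard_le_ncard_of_injOn g (fun c hc => (hg c (by simpa using hc)).2)
        (fun c hc c' hc' hgc =>
          TF.comp_eq_of_mem_csupp (hg c (by simpa using hc)).1
            (hgc ▸ (hg c' (by simpa using hc')).1)) (Set.toFinite _)
    rw [Set.ncard_coe_finset, endpts_ncard] at hcard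
    exact hcard
  have hsplitall : ∀ c ∈ T, (bnd M (TF.csupp c)).ncard
      = (bnd M (TF.csupp c) \ {e0}).ncard + (bnd M (TF.csupp c) ∩ {e0}).ncard := by
    intro c _
    conv_lhs => rw [← Set.diff_union_inter (bnd M (TF.csupp c)) {e0}]
    refine Set.ncard_union_eq ?_ (Set.toFinite _) (Set.toFinite _)
    rw [Set.disjoint_left]
    rintro x ⟨_, hx2⟩ ⟨_, hx3⟩
    exact hx2 hx3
  have htot : 3 * T.card ≤ ∑ c ∈ T, (bnd M (TF.csupp c)).ncard := by
    calc 3 * T.card = ∑ _c ∈ T, 3 := by rw [Finset.sum_const, smul_eq_mul, mul_comm]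
      _ ≤ _ := Finset.sum_le_sum hbnd3
  have hS3 : Sedges.ncard ≤ 3 * S.ncard := by
    have hsub2 : Sedges.toFinset ⊆ S.toFinset.biUnion
        (fun v => Finset.univ.filter (fun g : E => v ∈ M.ends g)) := by
      intro g hg
      rw [Set.mem_toFinset] at hg
      obtain ⟨v, hv, hvg⟩ := hg
      exact Finset.mem_biUnion.mpr ⟨v, Set.mem_toFinset.mpr hv, by simp [hvg]⟩
    calc Sedges.ncard = Sedges.toFinset.card := Set.ncard_eq_toFinset_card' _
      _ ≤ _ := Finset.card_le_card hsub2
      _ ≤ ∑ v ∈ S.toFinset, (Finset.univ.filter (fun g : E => v ∈ M.ends g)).card :=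
          Finset.card_biUnion_le
      _ = ∑ _v ∈ S.toFinset, 3 := Finset.sum_congr rfl
          (fun v _ => by rw [← degree_eq_card, hcubic v])
      _ = 3 * S.ncard := by
          rw [Finset.sum_const, smul_eq_mul, Set.ncard_eq_toFinset_card' S]; ring
  have hfinal : ∑ c ∈ T, (bnd M (TF.csupp c)).ncard
      = ∑ c ∈ T, (bnd M (TF.csupp c) \ {e0}).ncard
        + ∑ c ∈ T, (bnd M (TF.csupp c) ∩ {e0}).ncard := by
    rw [← Finset.sum_add_distrib]
    exact Finset.sum_congr rfl hsplitall
  rw [hoc]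
  omega


end TFM


/-- In a `2`-edge-connected cubic multigraph with an even number of vertices, every edge
lies in some `2`-factor. -/
theorem two_factor_through_edge {V E : Type*} [Fintype V] [Fintype E]
    (M : Multigraph V E) (hconn : M.Connected) (hbridgeless : ∀ e : E, ¬ M.IsBridge e)
    (hcubic : M.IsCubic) (heven : Even (Fintype.card V)) (e : E) :
    ∃ F : Set E, M.IsTwoFactor F ∧ e ∈ F := by
  classical
  set H := TFM.HG M e with hHdef
  have hT : ∀ W ⊆ (Set.univ : Set V), TF.oc H (Set.univ \ W) ≤ W.ncard :=
    fun W _ => TFM.plesnik M hbridgeless hcubic e W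
  obtain ⟨Msub, hmatch, hverts⟩ :=
    TF.tutte_aux H (Set.univ : Set V).ncard Set.univ le_rfl hT
  have hpart : ∀ v : V, ∃! w, Msub.Adj v w := fun v => hmatch (by rw [hverts]; trivial)
  set pick : Sym2 V → E := fun p =>
    if h : ∃ e', e' ≠ e ∧ M.ends e' = p then h.choose else e with hpickdef
  have hpick : ∀ p : Sym2 V, (∃ e', e' ≠ e ∧ M.ends e' = p) →
      pick p ≠ e ∧ M.ends (pick p) = p := by
    intro p h
    rw [hpickdef]
    simp only [dif_pos h]
    exact h.choose_spec
  set Mset : Set E := {g | ∃ u w, Msub.Adj u w ∧ g = pick s(u, w)} with hMsetdef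
  have hHadj : ∀ {u w : V}, Msub.Adj u w → ∃ e', e' ≠ e ∧ M.ends e' = s(u, w) :=
    fun h => h.adj_sub
  have hone : ∀ v : V, {g | g ∈ Mset ∧ v ∈ M.ends g}.ncard = 1 := by
    intro v
    obtain ⟨w, hw, hwu⟩ := hpart v
    have hp := hpick _ (hHadj hw)
    have hset : {g | g ∈ Mset ∧ v ∈ M.ends g} = {pick s(v, w)} := by
      ext g
      simp only [Set.mem_setOf_eq, Set.mem_singleton_iff]
      constructor
      · rintro ⟨⟨u', w', hadj', rfl⟩, hvg⟩
        have hp' := hpick _ (hHadj hadj')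
        rw [hp'.2, Sym2.mem_iff] at hvg
        rcases hvg with rfl | rfl
        · obtain rfl : w' = w := hwu w' hadj'
          rfl
        · obtain rfl : u' = w := hwu u' hadj'.symm
          rw [Sym2.eq_swap]
      · rintro rfl
        exact ⟨⟨v, w, hw, rfl⟩, by rw [hp.2]; simp⟩
    rw [hset, Set.ncard_singleton]
  have henotin : e ∉ Mset := by
    rintro ⟨u, w, hadj, heq⟩
    exact (hpick _ (hHadj hadj)).1 heq.symm
  refine ⟨Msetᶜ, ?_, henotin⟩
  intro v
  have hdeg := hcubic v
  rw [Multigraph.degree] at hdeg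
  have hsub : {g | g ∈ Mset ∧ v ∈ M.ends g} ⊆ {g : E | v ∈ M.ends g} := fun g hg => hg.2
  have hdiff : {g : E | g ∈ Msetᶜ ∧ v ∈ M.ends g}
      = {g : E | v ∈ M.ends g} \ {g | g ∈ Mset ∧ v ∈ M.ends g} := by
    ext g
    simp only [Set.mem_setOf_eq, Set.mem_diff, Set.mem_compl_iff]
    tauto
  show {g : E | g ∈ Msetᶜ ∧ v ∈ M.ends g}.ncard = 2
  rw [hdiff, Set.ncard_diff hsub (Set.toFinite _), hone v, hdeg]
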